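/- arXiv:2502.21262 — 2 statements merged into one kernel-verified Lean document; each statement's English description precedes it below -/
import Mathlib

section
/- Let M = (F, Λ, E, V) and M̂ = (F̂, Λ̂, Ê, V̂) be belief models such that M̂ covers M, M̂ is complete (ker(Ê) ∩ V̂ ⊆ ker(Λ̂) ∩ V̂), and let R ∈ V with G = Λ(R), G_O = E(R). Then every R̂ ∈ V̂ with Ê(R̂) = G_O satisfies Λ̂(R̂) = G; in particular {Λ̂(R̂) : R̂ ∈ V̂, Ê(R̂) = G_O} = {G}. -/
theorem stmt9 {F Fh T O : Type*} [Fintype F] [Fintype Fh] [Fintype T] [Fintype O]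
    (Λ : (F → ℝ) →ₗ[ℝ] (T → ℝ)) (E : (F → ℝ) →ₗ[ℝ] (O → ℝ))
    (V : Submodule ℝ (F → ℝ))
    (Λh : (Fh → ℝ) →ₗ[ℝ] (T → ℝ)) (Eh : (Fh → ℝ) →ₗ[ℝ] (O → ℝ))
    (Vh : Submodule ℝ (Fh → ℝ))
    (hcover : ∀ v ∈ V, ∃ vh ∈ Vh, Λh vh = Λ v ∧ Eh vh = E v)
    (hcomplete : LinearMap.ker Eh ⊓ Vh ≤ LinearMap.ker Λh ⊓ Vh)
    (R : F → ℝ) (hR : R ∈ V) (G : T → ℝ) (GO : O → ℝ)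
    (hG : Λ R = G) (hGO : E R = GO) :
    (∀ Rh ∈ Vh, Eh Rh = GO → Λh Rh = G) ∧
    {g : T → ℝ | ∃ Rh ∈ Vh, Eh Rh = GO ∧ g = Λh Rh} = {G} := by
  obtain ⟨vh, hvhV, hvhΛ, hvhE⟩ := hcover R hR
  have key : ∀ Rh ∈ Vh, Eh Rh = GO → Λh Rh = G := by
    intro Rh hRhV hRhE
    have hmem : Rh - vh ∈ LinearMap.ker Eh ⊓ Vh := by
      refine ⟨?_, sub_mem hRhV hvhV⟩
      simp [LinearMap.mem_ker, map_sub, hRhE, hvhE, hGO]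
    have h0 : Λh (Rh - vh) = 0 := (hcomplete hmem).1
    rw [map_sub, sub_eq_zero] at h0
    have this := h0
    rw [this, hvhΛ, hG]
  refine ⟨key, ?_⟩
  ext g
  constructor
  · rintro ⟨Rh, hRhV, hRhE, rfl⟩
    exact key Rh hRhV hRhE
  · rintro rfl
    exact ⟨vh, hvhV, by rw [hvhE, hGO], (key vh hvhV (by rw [hvhE, hGO])).symm⟩
end

section
/- Let M = (F, Λ, E, V) be a balanced belief model: Λ and E are row-constant linear maps and V contains all constant functions. Fix R ∈ V, let G = Λ(R) and let σ : ℝ → (0,1) be a bijection with σ(r) + σ(−r) = 1. Define, for R' ∈ ℝ^F, the choice probability P^{R'}(o ≻ o') = σ([E(R')](o) − [E(R')](o')). Then the set {Λ(R') − G : R' ∈ V, P^{R'} = P^{R}} equals Λ(ker(E) ∩ V) + {c·1_T : c ∈ ℝ}, where 1_T is the constant-one function on T. -/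
open Finset

/-- A linear map `A : ℝ^X → ℝ^Y` is row-constant if all its row sums equal the
same nonzero constant. -/
def RowConstant {X Y : Type*} [Fintype X] [DecidableEq X]
    (A : (X → ℝ) →ₗ[ℝ] (Y → ℝ)) : Prop :=
  ∃ c : ℝ, c ≠ 0 ∧ ∀ y : Y, ∑ x, A (Pi.single x 1) y = c

lemma rowconst_const {X Y : Type*} [Fintype X] [DecidableEq X]
    (A : (X → ℝ) →ₗ[ℝ] (Y → ℝ)) (c : ℝ)
    (hc : ∀ y : Y, ∑ x, A (Pi.single x 1) y = c) (d : ℝ) :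
    A (fun _ => d) = fun _ => d * c := by
  have h1 : (fun _ : X => d) = d • ∑ x : X, Pi.single x (1 : ℝ) := by
    rw [Finset.univ_sum_single (fun _ : X => (1 : ℝ))]
    funext x; simp
  funext y
  rw [h1, map_smul, map_sum]
  simp only [Pi.smul_apply, Finset.sum_apply, smul_eq_mul]
  rw [hc y]

theorem stmt14 {F T O : Type*} [Fintype F] [Fintype T] [Fintype O] [DecidableEq F]
    (Λ : (F → ℝ) →ₗ[ℝ] (T → ℝ)) (E : (F → ℝ) →ₗ[ℝ] (O → ℝ))
    (V : Submodule ℝ (F → ℝ))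
    (hΛ : RowConstant Λ) (hE : RowConstant E)
    (hV : ∀ c : ℝ, (fun _ : F => c) ∈ V)
    (R : F → ℝ) (hR : R ∈ V) (G : T → ℝ) (hG : Λ R = G)
    (σ : ℝ → ℝ)
    (hσbij : Set.BijOn σ Set.univ (Set.Ioo (0 : ℝ) 1))
    (hσsym : ∀ r : ℝ, σ r + σ (-r) = 1) :
    {g : T → ℝ | ∃ R' ∈ V,
        (∀ o o' : O, σ (E R' o - E R' o') = σ (E R o - E R o')) ∧ g = Λ R' - G} =
      {g : T → ℝ | ∃ a ∈ Λ '' ((LinearMap.ker E ⊓ V : Submodule ℝ (F → ℝ)) : Set (F → ℝ)),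
        ∃ c : ℝ, g = a + fun _ : T => c} := by
  obtain ⟨cΛ, hcΛ0, hcΛ⟩ := hΛ
  obtain ⟨cE, hcE0, hcE⟩ := hE
  have hΛc : ∀ d : ℝ, Λ (fun _ => d) = fun _ => d * cΛ := rowconst_const Λ cΛ hcΛ
  have hEc' : ∀ d : ℝ, E (fun _ => d) = fun _ => d * cE := rowconst_const E cE hcE
  have hσinj : Function.Injective σ := fun a b h => hσbij.injOn trivial trivial h
  ext g
  simp only [Set.mem_setOf_eq]
  constructor
  · rintro ⟨R', hR'V, hP, rfl⟩
    have hdiff : ∀ o o' : O, E R' o - E R' o' = E R o - E R o' :=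
      fun o o' => hσinj (hP o o')
    -- E (R' - R) is constant on O
    by_cases hO : Nonempty O
    · obtain ⟨o₀⟩ := hO
      set k := E R' o₀ - E R o₀ with hk
      have hEc : E (R' - R) = fun _ => k := by
        funext o
        have := hdiff o o₀
        simp only [map_sub, Pi.sub_apply]
        linarith
      set d := k / cE with hd
      refine ⟨Λ (R' - R - fun _ => d), ⟨R' - R - (fun _ => d), ⟨?_, ?_⟩, rfl⟩,
        d * cΛ, ?_⟩
      · have : E (R' - R - fun _ => d) = E (R' - R) - E (fun _ => d) := by
          simp [map_sub]
        rw [SetLike.mem_coe, LinearMap.mem_ker, this, hEc, hEc' d]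
        funext o
        simp [hd, div_mul_cancel₀ k hcE0]
      · exact V.sub_mem (V.sub_mem hR'V hR) (hV d)
      · have : Λ R' - G = Λ (R' - R - fun _ => d) + Λ (fun _ => d) := by
          rw [← hG]; simp [map_sub]
        rw [this, hΛc d]
    · -- O empty: E x = fun o => absurd, everything in ker
      set d := (0 : ℝ) with hd
      refine ⟨Λ (R' - R), ⟨R' - R, ⟨?_, V.sub_mem hR'V hR⟩, rfl⟩, 0, ?_⟩
      · rw [SetLike.mem_coe, LinearMap.mem_ker]; funext o; exact absurd ⟨o⟩ hO
      · rw [← hG]; funext t; simp [map_sub]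
  · rintro ⟨a, ⟨w, ⟨hwker, hwV⟩, rfl⟩, c, rfl⟩
    set d := c / cΛ with hd
    refine ⟨R + w + fun _ => d, V.add_mem (V.add_mem hR hwV) (hV d), ?_, ?_⟩
    · intro o o'
      have hEw : E w = 0 := hwker
      have hERp : E (R + w + fun _ => d) = fun o => E R o + d * cE := by
        funext o
        simp [map_add, hEw, hEc' d]
      rw [hERp]; ring_nf
    · rw [← hG]
      funext t
      rw [map_add, hΛc d]
      simp [map_add, hΛc d, hd, div_mul_cancel₀ c hcΛ0]
      ring
end
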